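/- Lower bound on per-agent utility of the leximin cake-sharing solution: in any instance with n agents with piecewise uniform utilities given by desired sets W_i ⊆ [0,1] and budget α ∈ (0,1), every leximin allocation A (a measurable subset of [0,1] with length at most α maximizing the leximin order of (ℓ(A∩W_1),…,ℓ(A∩W_n))) satisfies ℓ(A∩W_i) ≥ min{α/n, ℓ(W_i)} for every agent i. -/

import Mathlib

open MeasureTheory

/-- The non-decreasing rearrangement of a vector. -/
noncomputable def sortVec {n : ℕ} (x : Fin n → ℝ) : Fin n → ℝ := x ∘ Tuple.sort x

/-- Leximin (weak) order: compare sorted vectors lexicographically. -/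
noncomputable def leximinLE {n : ℕ} (x y : Fin n → ℝ) : Prop :=
  toLex (sortVec x) ≤ toLex (sortVec y)

lemma sortVec_monotone {n : ℕ} (x : Fin n → ℝ) : Monotone (sortVec x) :=
  Tuple.monotone_sort x

lemma sortVec_min {n : ℕ} (x : Fin n → ℝ) (τ : ℝ) :
    sortVec (fun j => min (x j) τ) = fun k => min (sortVec x k) τ := by
  have h : (fun j => min (x j) τ) ∘ (Tuple.sort x)
      = (fun j => min (x j) τ) ∘ Tuple.sort (fun j => min (x j) τ) := by
    rw [Tuple.comp_sort_eq_comp_iff_monotone]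
    exact fun p q hpq => min_le_min (Tuple.monotone_sort x hpq) le_rfl
  funext k
  have := congrFun h k
  simpa [sortVec, Function.comp] using this.symm

lemma sortVec_sum {n : ℕ} (x : Fin n → ℝ) : ∑ k, sortVec x k = ∑ k, x k :=
  Equiv.sum_comp (Tuple.sort x) x

lemma sortVec_le_sortVec {n : ℕ} {x y : Fin n → ℝ} (h : ∀ j, x j ≤ y j) (k : Fin n) :
    sortVec x k ≤ sortVec y k := by
  classical
  set σ := Tuple.sort x with hσ
  set π := Tuple.sort y with hπ
  have hcard : ((Finset.Iic k).image π).card = (k : ℕ) + 1 := by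
    rw [Finset.card_image_of_injective _ π.injective, Fin.card_Iic]
  have hBad : (Finset.univ.filter (fun j => x j < x (σ k))) ⊆ (Finset.Iio k).image σ := by
    intro j hj
    simp only [Finset.mem_filter, Finset.mem_univ, true_and] at hj
    refine Finset.mem_image.2 ⟨σ.symm j, ?_, by simp⟩
    rw [Finset.mem_Iio]
    by_contra hm
    push_neg at hm
    have h2 : x (σ k) ≤ x (σ (σ.symm j)) := Tuple.monotone_sort x hm
    rw [Equiv.apply_symm_apply] at h2
    exact absurd hj (not_lt.2 h2)
  have hex : ∃ j ∈ (Finset.Iic k).image π, ¬ x j < x (σ k) := by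
    by_contra hc
    push_neg at hc
    have hsub : (Finset.Iic k).image π ⊆ (Finset.Iio k).image σ := by
      intro j hj
      exact hBad (Finset.mem_filter.2 ⟨Finset.mem_univ _, hc j hj⟩)
    have hle := Finset.card_le_card hsub
    rw [hcard] at hle
    have h2 : ((Finset.Iio k).image σ).card ≤ (k : ℕ) := by
      rw [Finset.card_image_of_injective _ σ.injective, Fin.card_Iio]
    omega
  obtain ⟨j, hjmem, hjge⟩ := hex
  obtain ⟨m, hm, rfl⟩ := Finset.mem_image.1 hjmem
  calc x (σ k) ≤ x (π m) := not_lt.1 hjge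
    _ ≤ y (π m) := h _
    _ ≤ y (π k) := Tuple.monotone_sort y (Finset.mem_Iic.1 hm)

lemma toLex_sortVec_not_le {n : ℕ} {x y : Fin n → ℝ} (hle : ∀ j, x j ≤ y j) (i : Fin n)
    (hi : x i < y i) : ¬ toLex (sortVec y) ≤ toLex (sortVec x) := by
  intro hyx
  have h1 : toLex (sortVec x) ≤ toLex (sortVec y) := by
    haveI : WellFoundedLT (Fin n) := Finite.to_wellFoundedLT
    exact Pi.toLex_monotone (fun k => sortVec_le_sortVec hle k)
  have heq : sortVec x = sortVec y := congrArg ofLex (le_antisymm h1 hyx)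
  have hsum : ∑ k, sortVec x k < ∑ k, sortVec y k := by
    rw [sortVec_sum, sortVec_sum]
    exact Finset.sum_lt_sum (fun j _ => hle j) ⟨i, Finset.mem_univ i, hi⟩
  rw [heq] at hsum
  exact lt_irrefl _ hsum

lemma min_lex_le {n : ℕ} {u v : Fin n → ℝ} (hu : Monotone u) (hv : Monotone v) (τ : ℝ)
    (h : toLex u ≤ toLex v) :
    toLex (fun k => min (u k) τ) ≤ toLex (fun k => min (v k) τ) := by
  rcases eq_or_lt_of_le h with heq | hlt
  · have huv : u = v := by
      funext j; exact congrFun (congrArg ofLex heq) j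
    rw [huv]
  · obtain ⟨k, hpre, hk⟩ := hlt
    have hpre' : ∀ j, j < k → u j = v j := hpre
    have hk' : u k < v k := hk
    by_cases hc : min (u k) τ < min (v k) τ
    · exact le_of_lt ⟨k, fun j hj => by
        show min (u j) τ = min (v j) τ
        rw [hpre' j hj], hc⟩
    · push_neg at hc
      have hmle : min (u k) τ ≤ min (v k) τ := min_le_min hk'.le le_rfl
      have heqk : min (u k) τ = min (v k) τ := le_antisymm hmle hc
      have hτ : τ ≤ u k := by
        by_contra hτ
        push_neg at hτ
        have h1 : min (u k) τ = u k := min_eq_left hτ.le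
        have h2 : u k < min (v k) τ := lt_min hk' hτ
        rw [← heqk, h1] at h2
        exact lt_irrefl _ h2
      have hfeq : (fun k' => min (u k') τ) = fun k' => min (v k') τ := by
        funext j
        rcases lt_or_ge j k with hj | hj
        · rw [hpre' j hj]
        · rw [min_eq_right (hτ.trans (hu hj)), min_eq_right ((hτ.trans hk'.le).trans (hv hj))]
      exact le_of_eq (congrArg toLex hfeq)

lemma exists_subset_volume_eq {s : Set ℝ} (hs : MeasurableSet s) (hsub : s ⊆ Set.Icc 0 1)
    {r : ℝ} (hr0 : 0 ≤ r) (hr : r ≤ (volume s).toReal) :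
    ∃ t, t ⊆ s ∧ MeasurableSet t ∧ (volume t).toReal = r := by
  have hfin : ∀ u : Set ℝ, u ⊆ Set.Icc 0 1 → volume u ≠ ⊤ := by
    intro u hu
    exact ne_top_of_le_ne_top (by simp [Real.volume_Icc]) (measure_mono hu)
  set f : ℝ → ℝ := fun c => (volume (s ∩ Set.Iic c)).toReal with hf
  have hkey : ∀ c d : ℝ, c ≤ d → f d = f c + (volume (s ∩ Set.Ioc c d)).toReal := by
    intro c d hcd
    have hsplit : s ∩ Set.Iic d = (s ∩ Set.Iic c) ∪ (s ∩ Set.Ioc c d) := by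
      rw [← Set.inter_union_distrib_left, Set.Iic_union_Ioc_eq_Iic hcd]
    have hdisj : Disjoint (s ∩ Set.Iic c) (s ∩ Set.Ioc c d) := by
      apply Set.disjoint_of_subset Set.inter_subset_right Set.inter_subset_right
      exact Set.Iic_disjoint_Ioc le_rfl
    rw [hf]
    simp only
    rw [hsplit, measure_union hdisj (hs.inter measurableSet_Ioc),
      ENNReal.toReal_add (hfin _ ((Set.inter_subset_left).trans hsub))
        (hfin _ ((Set.inter_subset_left).trans hsub))]
  have hlip : LipschitzWith 1 f := by
    apply LipschitzWith.of_dist_le_mul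
    intro c d
    rw [Real.dist_eq, Real.dist_eq, NNReal.coe_one, one_mul]
    wlog hcd : d ≤ c generalizing c d
    · rw [abs_sub_comm, abs_sub_comm c d]; exact this d c (le_of_not_ge hcd)
    have h1 := hkey d c hcd
    have h2 : (volume (s ∩ Set.Ioc d c)).toReal ≤ c - d := by
      have hm : volume (s ∩ Set.Ioc d c) ≤ volume (Set.Ioc d c) :=
        measure_mono Set.inter_subset_right
      rw [Real.volume_Ioc] at hm
      calc (volume (s ∩ Set.Ioc d c)).toReal ≤ (ENNReal.ofReal (c - d)).toReal :=
            ENNReal.toReal_mono (by simp) hm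
        _ = c - d := ENNReal.toReal_ofReal (by linarith)
    rw [h1]
    have hsimp : f d + (volume (s ∩ Set.Ioc d c)).toReal - f d
        = (volume (s ∩ Set.Ioc d c)).toReal := by ring
    rw [hsimp, abs_of_nonneg ENNReal.toReal_nonneg, abs_of_nonneg (by linarith)]
    exact h2
  have hcont : Continuous f := hlip.continuous
  have hf0 : f 0 = 0 := by
    have hss : s ∩ Set.Iic 0 ⊆ {0} := by
      intro x hx
      have h1 := hsub hx.1
      have h2 := hx.2
      simp only [Set.mem_Iic] at h2
      simp only [Set.mem_singleton_iff]
      exact le_antisymm h2 h1.1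
    have h0 : volume (s ∩ Set.Iic 0) = 0 :=
      le_antisymm (le_trans (measure_mono hss) (by simp)) (zero_le)
    simp [hf, h0]
  have hf1 : f 1 = (volume s).toReal := by
    have hss : s ∩ Set.Iic 1 = s := by
      apply Set.inter_eq_self_of_subset_left
      intro x hx; exact (hsub hx).2
    simp [hf, hss]
  have hivt : Set.Icc (f 0) (f 1) ⊆ f '' Set.Icc 0 1 :=
    intermediate_value_Icc (by norm_num) hcont.continuousOn
  have hrmem : r ∈ Set.Icc (f 0) (f 1) := by rw [hf0, hf1]; exact ⟨hr0, hr⟩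
  obtain ⟨c, _, hfc⟩ := hivt hrmem
  exact ⟨s ∩ Set.Iic c, Set.inter_subset_left, hs.inter measurableSet_Iic, hfc⟩

/-- Lower bound on per-agent utility of the leximin cake-sharing solution:
every leximin allocation `A` gives every agent `i` utility at least
`min (α / n) (ℓ (W i))`. -/
theorem leximin_utility_lower_bound {n : ℕ} (hn : 0 < n)
    (α : ℝ) (hα : α ∈ Set.Ioo (0 : ℝ) 1)
    (W : Fin n → Set ℝ) (hWsub : ∀ i, W i ⊆ Set.Icc 0 1)
    (hWmeas : ∀ i, MeasurableSet (W i))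
    (hWpos : ∀ i, 0 < (volume (W i)).toReal)
    (A : Set ℝ) (hAsub : A ⊆ Set.Icc 0 1) (hAmeas : MeasurableSet A)
    (hAlen : (volume A).toReal ≤ α)
    (hlex : ∀ B : Set ℝ, B ⊆ Set.Icc 0 1 → MeasurableSet B → (volume B).toReal ≤ α →
      leximinLE (fun i => (volume (B ∩ W i)).toReal) (fun i => (volume (A ∩ W i)).toReal)) :
    ∀ i, min (α / n) ((volume (W i)).toReal) ≤ (volume (A ∩ W i)).toReal := by
  classical
  by_contra hcon
  push_neg at hcon
  obtain ⟨i, hi⟩ := hcon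
  haveI : Nonempty (Fin n) := ⟨⟨0, hn⟩⟩
  have hα0 := hα.1
  have hα1 := hα.2
  have hfin : ∀ u : Set ℝ, u ⊆ Set.Icc 0 1 → volume u ≠ ⊤ := by
    intro u hu
    exact ne_top_of_le_ne_top (by simp [Real.volume_Icc]) (measure_mono hu)
  set a : Fin n → ℝ := fun j => (volume (A ∩ W j)).toReal with ha
  have hai1 : a i < α / n := lt_of_lt_of_le hi (min_le_left _ _)
  have hai2 : a i < (volume (W i)).toReal := lt_of_lt_of_le hi (min_le_right _ _)
  have hann : ∀ j, 0 ≤ a j := fun j => ENNReal.toReal_nonneg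
  set U : Finset (Fin n) := Finset.univ.filter (fun j => a j ≤ a i) with hU
  set V : Set ℝ := ⋃ j ∈ U, W j with hV
  have hVmeas : MeasurableSet V := U.measurableSet_biUnion (fun j _ => hWmeas j)
  -- volume (A ∩ V) < α
  have hAV : (volume (A ∩ V)).toReal < α := by
    have h1 : A ∩ V = ⋃ j ∈ U, A ∩ W j := by rw [hV, Set.inter_iUnion₂]
    have h2 : volume (A ∩ V) ≤ ∑ j ∈ U, volume (A ∩ W j) := by
      rw [h1]; exact measure_biUnion_finset_le U _
    have hsumfin : (∑ j ∈ U, volume (A ∩ W j)) ≠ ⊤ :=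
      ENNReal.sum_ne_top.mpr (fun j _ => hfin _ ((Set.inter_subset_left).trans hAsub))
    have h3 : (volume (A ∩ V)).toReal ≤ ∑ j ∈ U, a j := by
      calc (volume (A ∩ V)).toReal ≤ (∑ j ∈ U, volume (A ∩ W j)).toReal :=
            ENNReal.toReal_mono hsumfin h2
        _ = ∑ j ∈ U, a j :=
            ENNReal.toReal_sum (fun j _ => hfin _ ((Set.inter_subset_left).trans hAsub))
    have h4 : ∑ j ∈ U, a j ≤ U.card • a i :=
      Finset.sum_le_card_nsmul U a (a i) (fun j hj => (Finset.mem_filter.1 hj).2)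
    have h5 : (U.card : ℝ) * a i ≤ (n : ℝ) * a i := by
      apply mul_le_mul_of_nonneg_right _ (hann i)
      exact_mod_cast (Finset.card_le_univ U).trans_eq (Finset.card_univ.trans (Fintype.card_fin n))
    have h6 : (n : ℝ) * a i < α := by
      have hn' : (0 : ℝ) < n := by exact_mod_cast hn
      have := mul_lt_mul_of_pos_left hai1 hn'
      rwa [mul_div_cancel₀ α (ne_of_gt hn')] at this
    rw [nsmul_eq_mul] at h4
    linarith
  set X : Set ℝ := A \ V with hX
  have hXmeas : MeasurableSet X := hAmeas.diff hVmeas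
  have hXsub : X ⊆ Set.Icc 0 1 := (Set.diff_subset).trans hAsub
  have hXr : (volume X).toReal = (volume A).toReal - (volume (A ∩ V)).toReal := by
    have hsplit : volume (A ∩ V) + volume (A \ V) = volume A :=
      measure_inter_add_diff A hVmeas
    have := congrArg ENNReal.toReal hsplit
    rw [ENNReal.toReal_add (hfin _ ((Set.inter_subset_left).trans hAsub))
      (hfin _ hXsub)] at this
    linarith [this]
  -- the increments
  set d1 : ℝ := α - (volume (A ∩ V)).toReal with hd1def
  have hd1 : 0 < d1 := by simp only [hd1def]; linarith
  set d2 : ℝ := (volume (W i)).toReal - a i with hd2def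
  have hd2 : 0 < d2 := by simp only [hd2def]; linarith
  set c : Fin n → ℝ := fun j => if a j ≤ a i then 1 else (a j - a i) / 2 with hc
  set d3 : ℝ := Finset.univ.inf' Finset.univ_nonempty c with hd3def
  have hd3 : 0 < d3 := by
    rw [hd3def, Finset.lt_inf'_iff]
    intro j _
    rw [hc]
    by_cases hj : a j ≤ a i
    · simp [hj]
    · simp only [hj, if_false]
      push_neg at hj
      linarith
  set δ : ℝ := min (min d1 d2) d3 with hδdef
  have hδ : 0 < δ := lt_min (lt_min hd1 hd2) hd3
  have hδd1 : δ ≤ d1 := (min_le_left _ _).trans (min_le_left _ _)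
  have hδd2 : δ ≤ d2 := (min_le_left _ _).trans (min_le_right _ _)
  have hδd3 : ∀ j, ¬ a j ≤ a i → δ ≤ (a j - a i) / 2 := by
    intro j hj
    have h1 : δ ≤ if a j ≤ a i then 1 else (a j - a i) / 2 :=
      (min_le_right _ _).trans (Finset.inf'_le c (Finset.mem_univ j))
    rwa [if_neg hj] at h1
  set r : ℝ := max (δ - (α - (volume A).toReal)) 0 with hrdef
  have hr0 : 0 ≤ r := le_max_right _ _
  have hrδ : r ≤ δ := max_le (by linarith) hδ.le
  have hrX : r ≤ (volume X).toReal := by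
    apply max_le _ ENNReal.toReal_nonneg
    rw [hXr]
    simp only [hd1def] at hδd1
    linarith
  obtain ⟨R, hRX, hRmeas, hRvol⟩ := exists_subset_volume_eq hXmeas hXsub hr0 hrX
  have hRA : R ⊆ A := hRX.trans Set.diff_subset
  -- S inside W i \ A
  have hWA : (volume (W i \ A)).toReal = (volume (W i)).toReal - a i := by
    have hsplit : volume (W i ∩ A) + volume (W i \ A) = volume (W i) :=
      measure_inter_add_diff (W i) hAmeas
    have h2 := congrArg ENNReal.toReal hsplit
    rw [ENNReal.toReal_add (hfin _ ((Set.inter_subset_left).trans (hWsub i)))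
      (hfin _ ((Set.diff_subset).trans (hWsub i))), Set.inter_comm] at h2
    have : (volume (A ∩ W i)).toReal = a i := rfl
    linarith [h2]
  obtain ⟨S, hSWA, hSmeas, hSvol⟩ := exists_subset_volume_eq
    ((hWmeas i).diff hAmeas) ((Set.diff_subset).trans (hWsub i)) hδ.le
    (by rw [hWA]; simp only [hd2def] at hδd2; linarith)
  have hSW : S ⊆ W i := hSWA.trans Set.diff_subset
  have hSdisjA : Disjoint S A := Set.disjoint_left.mpr (fun x hx => (hSWA hx).2)
  set B : Set ℝ := (A \ R) ∪ S with hB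
  have hBsub : B ⊆ Set.Icc 0 1 :=
    Set.union_subset ((Set.diff_subset).trans hAsub) (hSW.trans (hWsub i))
  have hBmeas : MeasurableSet B := (hAmeas.diff hRmeas).union hSmeas
  have hARr : (volume (A \ R)).toReal = (volume A).toReal - r := by
    have hsplit : volume (A ∩ R) + volume (A \ R) = volume A :=
      measure_inter_add_diff A hRmeas
    rw [Set.inter_eq_self_of_subset_right hRA] at hsplit
    have h2 := congrArg ENNReal.toReal hsplit
    rw [ENNReal.toReal_add (hfin _ (hRA.trans hAsub))
      (hfin _ ((Set.diff_subset).trans hAsub))] at h2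
    rw [hRvol] at h2
    linarith [h2]
  have hBvol : (volume B).toReal = (volume A).toReal - r + δ := by
    have hdisj : Disjoint (A \ R) S :=
      (Set.disjoint_of_subset_left Set.diff_subset hSdisjA.symm)
    rw [hB, measure_union' hdisj (hAmeas.diff hRmeas),
      ENNReal.toReal_add (hfin _ ((Set.diff_subset).trans hAsub))
        (hfin _ (hSW.trans (hWsub i))), hARr, hSvol]
  have hBlen : (volume B).toReal ≤ α := by
    have h1 : δ - (α - (volume A).toReal) ≤ r := le_max_left _ _
    rw [hBvol]; linarith
  set b : Fin n → ℝ := fun j => (volume (B ∩ W j)).toReal with hb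
  -- key utility bounds
  have hRV : Disjoint R V := Set.disjoint_left.mpr (fun x hx => (hRX hx).2)
  have hAWB : ∀ j, j ∈ U → A ∩ W j ⊆ B ∩ W j := by
    intro j hjU x hx
    refine ⟨Set.mem_union_left _ ⟨hx.1, ?_⟩, hx.2⟩
    intro hxR
    have hxV : x ∈ V := Set.mem_biUnion hjU hx.2
    exact (Set.disjoint_left.mp hRV hxR) hxV
  have hbU : ∀ j, a j ≤ a i → a j ≤ b j := by
    intro j hj
    have hjU : j ∈ U := Finset.mem_filter.2 ⟨Finset.mem_univ _, hj⟩
    exact ENNReal.toReal_mono (hfin _ ((Set.inter_subset_left).trans hBsub))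
      (measure_mono (hAWB j hjU))
  have hiU : i ∈ U := Finset.mem_filter.2 ⟨Finset.mem_univ _, le_rfl⟩
  have hbi : a i + δ ≤ b i := by
    have hsub2 : (A ∩ W i) ∪ S ⊆ B ∩ W i := by
      apply Set.union_subset (hAWB i hiU)
      intro x hx
      exact ⟨Set.mem_union_right _ hx, hSW hx⟩
    have hdisj : Disjoint (A ∩ W i) S :=
      Set.disjoint_of_subset_left Set.inter_subset_left hSdisjA.symm
    have h1 : volume ((A ∩ W i) ∪ S) = volume (A ∩ W i) + volume S :=
      measure_union' hdisj (hAmeas.inter (hWmeas i))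
    have h2 : (volume ((A ∩ W i) ∪ S)).toReal = a i + δ := by
      rw [h1, ENNReal.toReal_add (hfin _ ((Set.inter_subset_left).trans hAsub))
        (hfin _ (hSW.trans (hWsub i))), hSvol]
    calc a i + δ = (volume ((A ∩ W i) ∪ S)).toReal := h2.symm
      _ ≤ b i := ENNReal.toReal_mono (hfin _ ((Set.inter_subset_left).trans hBsub))
          (measure_mono hsub2)
  have hbNU : ∀ j, ¬ a j ≤ a i → a i + δ ≤ b j := by
    intro j hj
    have hsub2 : (A ∩ W j) \ R ⊆ B ∩ W j := by
      intro x hx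
      exact ⟨Set.mem_union_left _ ⟨hx.1.1, hx.2⟩, hx.1.2⟩
    have hup : volume (A ∩ W j) ≤ volume ((A ∩ W j) \ R) + volume R := by
      calc volume (A ∩ W j) ≤ volume (((A ∩ W j) \ R) ∪ R) :=
            measure_mono (fun x hx => by
              by_cases hxR : x ∈ R
              · exact Set.mem_union_right _ hxR
              · exact Set.mem_union_left _ ⟨hx, hxR⟩)
        _ ≤ volume ((A ∩ W j) \ R) + volume R := measure_union_le _ _
    have hupr : a j ≤ (volume ((A ∩ W j) \ R)).toReal + r := by
      have hne : volume ((A ∩ W j) \ R) + volume R ≠ ⊤ :=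
        ENNReal.add_ne_top.mpr
          ⟨hfin _ ((Set.diff_subset).trans ((Set.inter_subset_left).trans hAsub)),
            hfin _ (hRA.trans hAsub)⟩
      have hmr := ENNReal.toReal_mono hne hup
      rwa [ENNReal.toReal_add
        (hfin _ ((Set.diff_subset).trans ((Set.inter_subset_left).trans hAsub)))
        (hfin _ (hRA.trans hAsub)), hRvol] at hmr
    have hbj : (volume ((A ∩ W j) \ R)).toReal ≤ b j :=
      ENNReal.toReal_mono (hfin _ ((Set.inter_subset_left).trans hBsub))
        (measure_mono hsub2)
    have h3 := hδd3 j hj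
    push_neg at hj
    linarith
  -- conclude via leximin comparison
  set τ : ℝ := a i + δ with hτdef
  have hminle : ∀ j, min (a j) τ ≤ min (b j) τ := by
    intro j
    by_cases hj : a j ≤ a i
    · exact min_le_min (hbU j hj) le_rfl
    · calc min (a j) τ ≤ τ := min_le_right _ _
        _ = min (b j) τ := (min_eq_right (hbNU j hj)).symm
  have hmini : min (a i) τ < min (b i) τ := by
    rw [min_eq_left (by simp only [hτdef]; linarith), min_eq_right (hbi)]
    simp only [hτdef]; linarith
  have hlexBA : toLex (sortVec b) ≤ toLex (sortVec a) := hlex B hBsub hBmeas hBlen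
  have hle2 := min_lex_le (sortVec_monotone b) (sortVec_monotone a) τ hlexBA
  rw [← sortVec_min b τ, ← sortVec_min a τ] at hle2
  exact toLex_sortVec_not_le hminle i hmini hle2
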